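/- For all integers r ≥ 0 and ℓ ≥ 1, with q = r, n = 2(ℓ+1) + 2(3r+3) + 2, and d the shortest-path distances of the unweighted undirected graph G_{ℓ,r} on the complete undirected graph K_n (on node set V_{ℓ,r}), one has min_{x ∈ SP^int(K_n,s,t)} d·x ≥ 3ℓ − 2; that is, every Hamiltonian path of K_n from s to t has d-length at least 3ℓ − 2. -/

import Mathlib

open Finset

namespace TSPGap


/-! ### Lovász–Schrijver lift-and-project operators -/

/-- `cone(R) = {(λ, λx) : λ ≥ 0, x ∈ R}`, with the extra 0th coordinate first. -/
def lsCone {ι : Type*} (R : Set (ι → ℝ)) : Set (ℝ × (ι → ℝ)) :=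
  {p | ∃ c : ℝ, ∃ y ∈ R, 0 ≤ c ∧ p.1 = c ∧ p.2 = fun i => c * y i}

/-- `X` is a protection matrix witnessing `x ∈ N(R)`: it is symmetric, its 0th row and
diagonal both equal `(1, x)`, and each row `X_i` and difference `X_0 - X_i` lies in `cone(R)`. -/
def IsProtection {ι : Type*} (R : Set (ι → ℝ)) (x : ι → ℝ)
    (X : Option ι → Option ι → ℝ) : Prop :=
  (∀ i j, X i j = X j i) ∧
  X none none = 1 ∧
  (∀ i, X none (some i) = x i) ∧
  (∀ i, X (some i) (some i) = x i) ∧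
  (∀ i, (X (some i) none, fun j => X (some i) (some j)) ∈ lsCone R) ∧
  (∀ i, (X none none - X (some i) none,
         fun j => X none (some j) - X (some i) (some j)) ∈ lsCone R)

/-- The Lovász–Schrijver `N` operator. -/
def lsN {ι : Type*} (R : Set (ι → ℝ)) : Set (ι → ℝ) :=
  {x | ∃ X : Option ι → Option ι → ℝ, IsProtection R x X}

/-- The Lovász–Schrijver `N₊` operator (protection matrix additionally PSD). -/
def lsNplus {ι : Type*} [Fintype ι] (R : Set (ι → ℝ)) : Set (ι → ℝ) :=
  {x | ∃ X : Matrix (Option ι) (Option ι) ℝ, X.PosSemidef ∧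
        IsProtection R x (fun i j => X i j)}

/-! ### Directed graphs -/

variable {V : Type*} [DecidableEq V]

/-- The list of (directed) steps of a walk given by its list of vertices. -/
def dSteps (l : List V) : List (V × V) := l.zip l.tail

/-- The steps of a closed walk given by its list of vertices. -/
def cycSteps (l : List V) : List (V × V) := l.zip (l.rotate 1)

/-- `l` is a directed walk from `u` to `v` using edges of `E`. -/
def IsDWalk (E : Finset (V × V)) (u v : V) (l : List V) : Prop :=
  l.head? = some u ∧ l.getLast? = some v ∧ ∀ a ∈ dSteps l, a ∈ E

/-- Total weight of a walk. -/
def dWalkWeight (w : V × V → ℝ) (l : List V) : ℝ := ((dSteps l).map w).sum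

/-- Shortest-path distance from `u` to `v` in the weighted directed graph `(E, w)`. -/
noncomputable def dDist (E : Finset (V × V)) (w : V × V → ℝ) (u v : V) : ℝ :=
  sInf {c | ∃ l : List V, IsDWalk E u v l ∧ dWalkWeight w l = c}

/-- `x(δ⁺(S))`. -/
def outCut (E : Finset (V × V)) (x : ↥E → ℝ) (S : Finset V) : ℝ :=
  ∑ e ∈ E.attach.filter (fun e => e.val.1 ∈ S ∧ e.val.2 ∉ S), x e

/-- `x(δ⁻(S))`. -/
def inCut (E : Finset (V × V)) (x : ↥E → ℝ) (S : Finset V) : ℝ :=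
  ∑ e ∈ E.attach.filter (fun e => e.val.1 ∉ S ∧ e.val.2 ∈ S), x e

/-- `d · x = ∑_e d_e x_e` over the edge set `E`. -/
def dDot (E : Finset (V × V)) (d : V × V → ℝ) (x : ↥E → ℝ) : ℝ :=
  ∑ e ∈ E.attach, d e.val * x e

/-- The balanced asymmetric tour polytope of the directed graph with node set `VS`
and edge set `E`. -/
def ATbal (VS : Finset V) (E : Finset (V × V)) : Set (↥E → ℝ) :=
  {x | (∀ e, 0 ≤ x e ∧ x e ≤ 1) ∧
       (∀ S : Finset V, S ⊆ VS → S.Nonempty → S ≠ VS →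
          1 ≤ outCut E x S ∧ 1 ≤ inCut E x S) ∧
       (∀ v ∈ VS, outCut E x {v} = inCut E x {v})}

/-- Indicator vectors of Hamiltonian cycles (on node set `VS`) among edges `E`. -/
def hamCycleVecs (VS : Finset V) (E : Finset (V × V)) : Set (↥E → ℝ) :=
  {x | ∃ c : List V, 2 ≤ c.length ∧ c.Nodup ∧ c.toFinset = VS ∧
        (∀ a ∈ cycSteps c, a ∈ E) ∧
        ∀ e : ↥E, x e = if e.val ∈ cycSteps c then 1 else 0}

/-- Edge set of the complete directed graph on the node set `VS` (no self-loops). -/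
def dComplete (VS : Finset V) : Finset (V × V) := (VS ×ˢ VS).filter (fun e => e.1 ≠ e.2)

/-- Edge set of the complete directed graph on all of `V` (no self-loops). -/
def dCompleteAll (V : Type*) [Fintype V] [DecidableEq V] : Finset (V × V) :=
  Finset.univ.filter (fun e => e.1 ≠ e.2)

/-- Out-degree of `v` in edge set `E`. -/
def outDeg (E : Finset (V × V)) (v : V) : ℕ := (E.filter (fun e => e.1 = v)).card

/-- In-degree of `v` in edge set `E`. -/
def inDeg (E : Finset (V × V)) (v : V) : ℕ := (E.filter (fun e => e.2 = v)).card

/-- A frame for the edge `e = (u,v)`: a set `F ⊆ E \ {e}` consisting of an edge-simple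
path from `u` to `v` together with zero or more edge-simple cycles, all pairwise
edge-disjoint. -/
def IsFrame (E : Finset (V × V)) (e : V × V) (F : Finset (V × V)) : Prop :=
  F ⊆ E.erase e ∧
  ∃ (p : List V) (cs : List (List V)),
    p.head? = some e.1 ∧ p.getLast? = some e.2 ∧ (∀ a ∈ dSteps p, a ∈ E) ∧
    (∀ c ∈ cs, c ≠ [] ∧ ∀ a ∈ cycSteps c, a ∈ E) ∧
    (dSteps p ++ (cs.map cycSteps).flatten).Nodup ∧
    F = (dSteps p ++ (cs.map cycSteps).flatten).toFinset

/-- There exist two edge-disjoint directed (simple) paths from `u` to `v` in `E`. -/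
def TwoEdgeDisjointPaths (E : Finset (V × V)) (u v : V) : Prop :=
  ∃ p q : List V, p.Nodup ∧ q.Nodup ∧
    p.head? = some u ∧ p.getLast? = some v ∧
    q.head? = some u ∧ q.getLast? = some v ∧
    (∀ a ∈ dSteps p, a ∈ E) ∧ (∀ a ∈ dSteps q, a ∈ E) ∧
    (dSteps p).Disjoint (dSteps q)




/-! ### The Charikar–Goemans–Karloff graphs -/

/-- Vertex type housing the graph `G_{k,r}` (index `k = 0` is a dummy level). -/
def CGKV : ℕ → Type
  | 0 => PUnit
  | 1 => ℕ
  | k + 2 => (ℕ × CGKV (k + 1)) ⊕ Fin 2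

instance CGKV.decEq : (k : ℕ) → DecidableEq (CGKV k)
  | 0 => inferInstanceAs (DecidableEq PUnit)
  | 1 => inferInstanceAs (DecidableEq ℕ)
  | k + 2 =>
      letI : DecidableEq (CGKV (k + 1)) := CGKV.decEq (k + 1)
      inferInstanceAs (DecidableEq ((ℕ × CGKV (k + 1)) ⊕ Fin 2))

/-- The source of `G_{k,r}`. -/
def CGKsrc (r : ℕ) : (k : ℕ) → CGKV k
  | 0 => PUnit.unit
  | 1 => (0 : ℕ)
  | _ + 2 => Sum.inr 0

/-- The sink of `G_{k,r}`. -/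
def CGKsnk (r : ℕ) : (k : ℕ) → CGKV k
  | 0 => PUnit.unit
  | 1 => (r + 1 : ℕ)
  | _ + 2 => Sum.inr 1

/-- The node set of `G_{k,r}`. -/
def CGKVS (r : ℕ) : (k : ℕ) → Finset (CGKV k)
  | 0 => ∅
  | 1 => Finset.range (r + 2)
  | k + 2 =>
      ((Finset.range r) ×ˢ CGKVS r (k + 1)).image Sum.inl ∪ {Sum.inr 0, Sum.inr 1}

/-- The edge set of `G_{k,r}`: at level 1, two oppositely-directed paths of `r+1` edges
on the nodes `0, …, r+1`; at level `k+2`, the edges of the `r` copies of `G_{k+1,r}`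
together with a path from the source `s` through the copies' sources to the sink `t`,
and a path from `t` through the copies' sinks (in the opposite order) back to `s`. -/
def CGKE (r : ℕ) : (k : ℕ) → Finset (CGKV k × CGKV k)
  | 0 => ∅
  | 1 => (dSteps (List.range (r + 2))).toFinset ∪
         (dSteps (List.range (r + 2)).reverse).toFinset
  | k + 2 =>
      (Finset.range r).biUnion
        (fun j => (CGKE r (k + 1)).image (fun e => (Sum.inl (j, e.1), Sum.inl (j, e.2)))) ∪
      (dSteps (Sum.inr 0 ::
        ((List.range r).map (fun j => Sum.inl (j, CGKsrc r (k + 1)))) ++ [Sum.inr 1])).toFinset ∪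
      (dSteps (Sum.inr 1 ::
        (((List.range r).map (fun j => Sum.inl (j, CGKsnk r (k + 1)))).reverse) ++ [Sum.inr 0])).toFinset

/-- Edge weights of `G_{k,r}` (and of `L_{k,r}`): level-`ℓ` edges have weight `r^(ℓ-1)`. -/
def CGKw (r : ℕ) : (k : ℕ) → CGKV k × CGKV k → ℝ
  | 0, _ => 0
  | 1, _ => 1
  | k + 2, e =>
      match e with
      | (Sum.inl (j, u), Sum.inl (j', v)) =>
          if j = j' then CGKw r (k + 1) (u, v) else (r : ℝ) ^ (k + 1)
      | _ => (r : ℝ) ^ (k + 1)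

/-- `v₁`: the successor of `s` on the forward path of `G_{k,r}`. -/
def Lv1 (r : ℕ) : (k : ℕ) → CGKV k
  | 0 => PUnit.unit
  | 1 => (1 : ℕ)
  | k + 2 => Sum.inl (0, CGKsrc r (k + 1))

/-- `v₂`: the predecessor of `t` on the forward path of `G_{k,r}`. -/
def Lv2 (r : ℕ) : (k : ℕ) → CGKV k
  | 0 => PUnit.unit
  | 1 => (r : ℕ)
  | k + 2 => Sum.inl (r - 1, CGKsrc r (k + 1))

/-- `v₃`: the successor of `t` on the backward path of `G_{k,r}`. -/
def Lv3 (r : ℕ) : (k : ℕ) → CGKV k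
  | 0 => PUnit.unit
  | 1 => (r : ℕ)
  | k + 2 => Sum.inl (r - 1, CGKsnk r (k + 1))

/-- `v₄`: the predecessor of `s` on the backward path of `G_{k,r}`. -/
def Lv4 (r : ℕ) : (k : ℕ) → CGKV k
  | 0 => PUnit.unit
  | 1 => (1 : ℕ)
  | k + 2 => Sum.inl (0, CGKsnk r (k + 1))

/-- The node set `V_{k,r}` of `L_{k,r}`: the nodes of `G_{k,r}` minus the two terminals. -/
def LVS (r k : ℕ) : Finset (CGKV k) :=
  ((CGKVS r k).erase (CGKsrc r k)).erase (CGKsnk r k)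

/-- The edge set `E_{k,r}` of `L_{k,r}`: the edges of `G_{k,r}` not incident to a terminal,
plus the two new edges `(v₂,v₁)` and `(v₄,v₃)`. -/
def LE (r k : ℕ) : Finset (CGKV k × CGKV k) :=
  (CGKE r k).filter (fun e =>
    e.1 ≠ CGKsrc r k ∧ e.1 ≠ CGKsnk r k ∧ e.2 ≠ CGKsrc r k ∧ e.2 ≠ CGKsnk r k) ∪
  {(Lv2 r k, Lv1 r k), (Lv4 r k, Lv3 r k)}



/-! ### Undirected graphs -/

variable {V : Type*} [DecidableEq V]

/-- The (undirected) steps of a walk given by its list of vertices. -/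
def uSteps (l : List V) : List (Sym2 V) := (l.zip l.tail).map (fun p => Sym2.mk p.1 p.2)

/-- `l` is a walk from `u` to `v` in the undirected edge set `E`. -/
def IsUWalk (E : Finset (Sym2 V)) (u v : V) (l : List V) : Prop :=
  l.head? = some u ∧ l.getLast? = some v ∧ ∀ e ∈ uSteps l, e ∈ E

/-- Whether the undirected edge `e` crosses the cut `(S, S̄)`. -/
def uCrosses (S : Finset V) (e : Sym2 V) : Bool :=
  Sym2.lift ⟨fun a b => xor (decide (a ∈ S)) (decide (b ∈ S)),
    fun a b => Bool.xor_comm _ _⟩ e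

/-- `x(δ(S))`. -/
def uCut (E : Finset (Sym2 V)) (x : ↥E → ℝ) (S : Finset V) : ℝ :=
  ∑ e ∈ E.attach.filter (fun e => uCrosses S e.val), x e

/-- `d · x = ∑_e d_e x_e` over the undirected edge set `E`. -/
def uDot (E : Finset (Sym2 V)) (d : Sym2 V → ℝ) (x : ↥E → ℝ) : ℝ :=
  ∑ e ∈ E.attach, d e.val * x e

/-- The symmetric tour polytope of the undirected graph with node set `VS`, edges `E`. -/
def STpoly (VS : Finset V) (E : Finset (Sym2 V)) : Set (↥E → ℝ) :=
  {x | (∀ e, 0 ≤ x e ∧ x e ≤ 1) ∧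
       (∀ S : Finset V, S ⊆ VS → S.Nonempty → S ≠ VS → 2 ≤ uCut E x S) ∧
       (∀ v ∈ VS, uCut E x {v} = 2)}

/-- The symmetric path polytope of the undirected graph with node set `VS`, edges `E`,
and endpoints `s`, `t`. -/
def SPpoly (VS : Finset V) (E : Finset (Sym2 V)) (s t : V) : Set (↥E → ℝ) :=
  {x | (∀ e, 0 ≤ x e ∧ x e ≤ 1) ∧
       (∀ S : Finset V, S ⊆ VS → S.Nonempty → S ≠ VS →
          (((s ∈ S) ↔ (t ∈ S)) → 2 ≤ uCut E x S) ∧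
          (¬((s ∈ S) ↔ (t ∈ S)) → 1 ≤ uCut E x S)) ∧
       (∀ v ∈ VS, v ≠ s → v ≠ t → uCut E x {v} = 2) ∧
       uCut E x {s} = 1 ∧ uCut E x {t} = 1}

/-- Indicator vectors of Hamiltonian paths from `s` to `t` (on node set `VS`) among
edges `E`. -/
def uHamPathVecs (VS : Finset V) (E : Finset (Sym2 V)) (s t : V) : Set (↥E → ℝ) :=
  {x | ∃ p : List V, p.Nodup ∧ p.toFinset = VS ∧
        p.head? = some s ∧ p.getLast? = some t ∧
        (∀ e ∈ uSteps p, e ∈ E) ∧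
        ∀ e : ↥E, x e = if e.val ∈ uSteps p then 1 else 0}

/-- Edge set of the complete undirected graph on all of `V` (no self-loops). -/
def uCompleteAll (V : Type*) [Fintype V] [DecidableEq V] : Finset (Sym2 V) :=
  Finset.univ.filter (fun e => ¬ e.IsDiag)

/-- Shortest-path distance (number of edges) between the endpoints of `e`, in the
unweighted undirected graph with edge set `E`. -/
noncomputable def uDist (E : Finset (Sym2 V)) (e : Sym2 V) : ℝ :=
  sInf {c | ∃ u v : V, e = s(u, v) ∧
    ∃ l : List V, IsUWalk E u v l ∧ ((uSteps l).length : ℝ) = c}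

/-! ### Cheung's graphs -/

/-- The node set `V_{ℓ,q}` of Cheung's graph `G_{ℓ,q}`: a top path and a bottom path of
`ℓ+1` nodes each, a left and a right clique of `3q+3` nodes each, and nodes `s`, `t`. -/
inductive ChV (l q : ℕ) where
  | top : Fin (l + 1) → ChV l q
  | bot : Fin (l + 1) → ChV l q
  | left : Fin (3 * q + 3) → ChV l q
  | right : Fin (3 * q + 3) → ChV l q
  | vs : ChV l q
  | vt : ChV l q
deriving DecidableEq, Fintype

/-- The edges of the two paths of `G_{ℓ,q}`. -/
def ChEpaths (l q : ℕ) : Finset (Sym2 (ChV l q)) :=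
  (Finset.univ : Finset (Fin l)).image
    (fun i => s(ChV.top i.castSucc, ChV.top i.succ)) ∪
  (Finset.univ : Finset (Fin l)).image
    (fun i => s(ChV.bot i.castSucc, ChV.bot i.succ))

/-- The edges within the two cliques of `G_{ℓ,q}`. -/
def ChEcliques (l q : ℕ) : Finset (Sym2 (ChV l q)) :=
  ((Finset.univ : Finset (Fin (3 * q + 3) × Fin (3 * q + 3))).filter
      (fun p => p.1 ≠ p.2)).image (fun p => s(ChV.left p.1, ChV.left p.2)) ∪
  ((Finset.univ : Finset (Fin (3 * q + 3) × Fin (3 * q + 3))).filter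
      (fun p => p.1 ≠ p.2)).image (fun p => s(ChV.right p.1, ChV.right p.2))

/-- The connection edges of `G_{ℓ,q}`: path endpoints to the cliques, `s` to the left
clique, and `t` to the right clique. -/
def ChEconn (l q : ℕ) : Finset (Sym2 (ChV l q)) :=
  (Finset.univ : Finset (Fin (3 * q + 3))).image (fun i => s(ChV.top 0, ChV.left i)) ∪
  (Finset.univ : Finset (Fin (3 * q + 3))).image (fun i => s(ChV.bot 0, ChV.left i)) ∪
  (Finset.univ : Finset (Fin (3 * q + 3))).image
    (fun i => s(ChV.top (Fin.last l), ChV.right i)) ∪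
  (Finset.univ : Finset (Fin (3 * q + 3))).image
    (fun i => s(ChV.bot (Fin.last l), ChV.right i)) ∪
  (Finset.univ : Finset (Fin (3 * q + 3))).image (fun i => s(ChV.vs, ChV.left i)) ∪
  (Finset.univ : Finset (Fin (3 * q + 3))).image (fun i => s(ChV.vt, ChV.right i))

/-- The edge set `E_{ℓ,q}` of Cheung's graph `G_{ℓ,q}`. -/
def ChE (l q : ℕ) : Finset (Sym2 (ChV l q)) :=
  ChEpaths l q ∪ ChEcliques l q ∪ ChEconn l q

/-- The node set of `G'_{ℓ,q}`: `G_{ℓ,q}` plus `ℓ-1` new internal path nodes. -/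
inductive ChV' (l q : ℕ) where
  | old : ChV l q → ChV' l q
  | mid : Fin (l - 1) → ChV' l q
deriving DecidableEq, Fintype

/-- The new `s`–`t` path of `G'_{ℓ,q}` (as a list of nodes; it has `ℓ` edges). -/
def ChPathList (l q : ℕ) : List (ChV' l q) :=
  ChV'.old ChV.vs :: ((List.finRange (l - 1)).map ChV'.mid ++ [ChV'.old ChV.vt])

/-- The edge set `E'_{ℓ,q}` of `G'_{ℓ,q}`: the (old) edges of `G_{ℓ,q}` together with the
`ℓ` new edges of a path from `s` to `t` through `ℓ-1` new nodes. -/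
def ChE' (l q : ℕ) : Finset (Sym2 (ChV' l q)) :=
  (ChE l q).image (Sym2.map ChV'.old) ∪ (uSteps (ChPathList l q)).toFinset


/-! ### Auxiliary development for Statement 14 -/

section Stmt14Aux

open List

/-- Is position `p` in the circular cut `S_a = {a+1, …, a+l+2}`? -/
def inCut2 (l a p : ℕ) : Bool := decide (a + 1 ≤ p ∧ p ≤ a + l + 2)

/-- Number of circular cuts (out of `l+2`) separating positions `p` and `p'`. -/
def cpos (l p p' : ℕ) : ℕ :=
  ((Finset.range (l+2)).filter (fun a => inCut2 l a p ≠ inCut2 l a p')).card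

lemma cpos_self (l p : ℕ) : cpos l p p = 0 := by
  simp [cpos]

lemma cpos_symm (l p p' : ℕ) : cpos l p p' = cpos l p' p := by
  unfold cpos
  congr 1
  apply Finset.filter_congr
  intro a _
  constructor <;> exact Ne.symm

lemma cpos_triangle (l p p' p'' : ℕ) : cpos l p p'' ≤ cpos l p p' + cpos l p' p'' := by
  unfold cpos
  refine le_trans (Finset.card_le_card ?_) (Finset.card_union_le _ _)
  intro a ha
  simp only [Finset.mem_filter, Finset.mem_union] at *
  obtain ⟨h1, h2⟩ := ha
  by_cases h : inCut2 l a p = inCut2 l a p'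
  · exact Or.inr ⟨h1, fun hh => h2 (h.trans hh)⟩
  · exact Or.inl ⟨h1, h⟩

lemma cpos_le_one (l p p' : ℕ)
    (h : p = p' ∨ p + 1 = p' ∨ p' + 1 = p ∨ (p = 2*l+3 ∧ p' = 0) ∨ (p' = 2*l+3 ∧ p = 0)) :
    cpos l p p' ≤ 1 := by
  apply Finset.card_le_one.mpr
  intro a ha b hb
  simp only [cpos, inCut2, Finset.mem_filter, Finset.mem_range, ne_eq, decide_eq_decide] at ha hb
  omega

/-- Circle position of a node of Cheung's graph. -/
def chpos {l q : ℕ} : TSPGap.ChV l q → ℕ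
  | .top i => i.val + 1
  | .bot i => 2*l + 3 - i.val
  | .left _ => 0
  | .right _ => l + 2
  | .vs => 0
  | .vt => l + 2

section Walks

variable {V : Type*} [DecidableEq V]

lemma uSteps_nil : TSPGap.uSteps ([] : List V) = [] := rfl

lemma uSteps_single (a : V) : TSPGap.uSteps [a] = [] := rfl

lemma uSteps_cons_cons (a b : V) (L : List V) :
    TSPGap.uSteps (a :: b :: L) = s(a, b) :: TSPGap.uSteps (b :: L) := rfl

lemma uSteps_subset_iff_chain' (E : Finset (Sym2 V)) :
    ∀ L : List V, (∀ e ∈ TSPGap.uSteps L, e ∈ E) ↔ List.IsChain (fun a b => s(a, b) ∈ E) L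
  | [] => by simp [uSteps_nil]
  | [a] => by simp [uSteps_single]
  | a :: b :: L => by
      rw [uSteps_cons_cons, List.isChain_cons_cons, ← uSteps_subset_iff_chain' E (b :: L)]
      simp [List.forall_mem_cons]

lemma isUWalk_cons {E : Finset (Sym2 V)} {u v w : V} {L : List V}
    (hL : TSPGap.IsUWalk E v w L) (he : s(u, v) ∈ E) : TSPGap.IsUWalk E u w (u :: L) := by
  obtain ⟨h1, h2, h3⟩ := hL
  cases L with
  | nil => simp at h1
  | cons y r =>
    obtain rfl : y = v := by simpa using h1
    refine ⟨rfl, by simpa [List.getLast?_cons_cons] using h2, ?_⟩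
    rw [uSteps_cons_cons]
    intro e he'
    rcases List.mem_cons.mp he' with rfl | h
    · exact he
    · exact h3 e h

lemma isUWalk_reverse {E : Finset (Sym2 V)} {u v : V} {L : List V}
    (h : TSPGap.IsUWalk E u v L) : TSPGap.IsUWalk E v u L.reverse := by
  obtain ⟨h1, h2, h3⟩ := h
  refine ⟨?_, ?_, ?_⟩
  · rw [List.head?_reverse]; exact h2
  · rw [List.getLast?_reverse]; exact h1
  · rw [uSteps_subset_iff_chain'] at h3 ⊢
    rw [List.isChain_reverse]
    refine List.IsChain.imp ?_ h3
    intro a b hab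
    show s(b, a) ∈ E
    rwa [Sym2.eq_swap]

lemma isUWalk_trans {E : Finset (Sym2 V)} {u v w : V} {L1 L2 : List V}
    (h1 : TSPGap.IsUWalk E u w L1) (h2 : TSPGap.IsUWalk E w v L2) :
    TSPGap.IsUWalk E u v (L1 ++ L2.tail) := by
  obtain ⟨ha1, hb1, hc1⟩ := h1
  obtain ⟨ha2, hb2, hc2⟩ := h2
  cases L2 with
  | nil => simp at ha2
  | cons y r =>
    obtain rfl : y = w := by simpa using ha2
    cases r with
    | nil =>
      obtain rfl : y = v := by simpa using hb2
      simpa using ⟨ha1, hb1, hc1⟩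
    | cons b r2 =>
      show TSPGap.IsUWalk E u v (L1 ++ b :: r2)
      rw [uSteps_subset_iff_chain'] at hc1 hc2
      obtain ⟨hwb, hch⟩ := List.isChain_cons_cons.mp hc2
      cases L1 with
      | nil => simp at ha1
      | cons a t =>
        refine ⟨by simpa using ha1, ?_, ?_⟩
        · show ((a :: t) ++ b :: r2).getLast? = some v
          rw [List.getLast?_append]
          have hbr : (b :: r2).getLast? = some v := by
            simpa [List.getLast?_cons_cons] using hb2
          simp [hbr]
        · rw [uSteps_subset_iff_chain', List.isChain_append]
          refine ⟨hc1, hch, ?_⟩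
          intro x hx z hz
          obtain rfl : b = z := by simpa using hz
          rw [Option.mem_def, hb1] at hx
          obtain rfl := Option.some_inj.mp hx
          exact hwb

end Walks

end Stmt14Aux
section CheungWalks

variable {l q : ℕ}

lemma top_edge_mem (i : Fin l) :
    s(ChV.top (q := q) i.castSucc, ChV.top i.succ) ∈ ChE l q := by
  apply Finset.mem_union_left
  apply Finset.mem_union_left
  apply Finset.mem_union_left
  exact Finset.mem_image.mpr ⟨i, Finset.mem_univ _, rfl⟩

lemma bot_edge_mem (i : Fin l) :
    s(ChV.bot (q := q) i.castSucc, ChV.bot i.succ) ∈ ChE l q := by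
  apply Finset.mem_union_left
  apply Finset.mem_union_left
  apply Finset.mem_union_right
  exact Finset.mem_image.mpr ⟨i, Finset.mem_univ _, rfl⟩

lemma clique_left_mem (i j : Fin (3*q+3)) (hij : i ≠ j) :
    s(ChV.left (l := l) i, ChV.left j) ∈ ChE l q := by
  apply Finset.mem_union_left
  apply Finset.mem_union_right
  apply Finset.mem_union_left
  exact Finset.mem_image.mpr ⟨(i, j), Finset.mem_filter.mpr ⟨Finset.mem_univ _, hij⟩, rfl⟩

lemma conn_top0_mem (i : Fin (3*q+3)) :
    s(ChV.top (l := l) 0, ChV.left i) ∈ ChE l q := by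
  apply Finset.mem_union_right
  apply Finset.mem_union_left
  apply Finset.mem_union_left
  apply Finset.mem_union_left
  apply Finset.mem_union_left
  apply Finset.mem_union_left
  exact Finset.mem_image.mpr ⟨i, Finset.mem_univ _, rfl⟩

lemma conn_bot0_mem (i : Fin (3*q+3)) :
    s(ChV.bot (l := l) 0, ChV.left i) ∈ ChE l q := by
  apply Finset.mem_union_right
  apply Finset.mem_union_left
  apply Finset.mem_union_left
  apply Finset.mem_union_left
  apply Finset.mem_union_left
  apply Finset.mem_union_right
  exact Finset.mem_image.mpr ⟨i, Finset.mem_univ _, rfl⟩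

lemma conn_topl_mem (i : Fin (3*q+3)) :
    s(ChV.top (Fin.last l), ChV.right i) ∈ ChE l q := by
  apply Finset.mem_union_right
  apply Finset.mem_union_left
  apply Finset.mem_union_left
  apply Finset.mem_union_left
  apply Finset.mem_union_right
  exact Finset.mem_image.mpr ⟨i, Finset.mem_univ _, rfl⟩

lemma conn_botl_mem (i : Fin (3*q+3)) :
    s(ChV.bot (Fin.last l), ChV.right i) ∈ ChE l q := by
  apply Finset.mem_union_right
  apply Finset.mem_union_left
  apply Finset.mem_union_left
  apply Finset.mem_union_right
  exact Finset.mem_image.mpr ⟨i, Finset.mem_univ _, rfl⟩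

lemma conn_vs_mem (i : Fin (3*q+3)) :
    s(ChV.vs (l := l), ChV.left i) ∈ ChE l q := by
  apply Finset.mem_union_right
  apply Finset.mem_union_left
  apply Finset.mem_union_right
  exact Finset.mem_image.mpr ⟨i, Finset.mem_univ _, rfl⟩

lemma conn_vt_mem (i : Fin (3*q+3)) :
    s(ChV.vt (l := l), ChV.right i) ∈ ChE l q := by
  apply Finset.mem_union_right
  apply Finset.mem_union_right
  exact Finset.mem_image.mpr ⟨i, Finset.mem_univ _, rfl⟩

/-- The hub node. -/
def hubV (l q : ℕ) : ChV l q := ChV.left ⟨0, by omega⟩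

lemma top_step_mem (k : ℕ) (hk : k < l) (h1 : k + 1 < l + 1) (h0 : k < l + 1) :
    s(ChV.top (q := q) ⟨k+1, h1⟩, ChV.top ⟨k, h0⟩) ∈ ChE l q := by
  have h := top_edge_mem (l := l) (q := q) ⟨k, hk⟩
  rw [Fin.castSucc_mk, Fin.succ_mk] at h
  rw [Sym2.eq_swap]
  exact h

lemma bot_step_mem (k : ℕ) (hk : k < l) (h1 : k + 1 < l + 1) (h0 : k < l + 1) :
    s(ChV.bot (q := q) ⟨k+1, h1⟩, ChV.bot ⟨k, h0⟩) ∈ ChE l q := by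
  have h := bot_edge_mem (l := l) (q := q) ⟨k, hk⟩
  rw [Fin.castSucc_mk, Fin.succ_mk] at h
  rw [Sym2.eq_swap]
  exact h

/-- Walk from `top k` down to the hub. -/
def wTop (l q : ℕ) : (k : ℕ) → k < l + 1 → List (ChV l q)
  | 0, h => [ChV.top ⟨0, h⟩, hubV l q]
  | k+1, h => ChV.top ⟨k+1, h⟩ :: wTop l q k (by omega)

/-- Walk from `bot k` down to the hub. -/
def wBot (l q : ℕ) : (k : ℕ) → k < l + 1 → List (ChV l q)
  | 0, h => [ChV.bot ⟨0, h⟩, hubV l q]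
  | k+1, h => ChV.bot ⟨k+1, h⟩ :: wBot l q k (by omega)

lemma top_zero_eq (h : 0 < l + 1) : (ChV.top (l := l) (q := q) 0) = ChV.top ⟨0, h⟩ := by
  congr 1

lemma bot_zero_eq (h : 0 < l + 1) : (ChV.bot (l := l) (q := q) 0) = ChV.bot ⟨0, h⟩ := by
  congr 1

lemma wTop_walk : ∀ (k : ℕ) (h : k < l + 1),
    IsUWalk (ChE l q) (ChV.top ⟨k, h⟩) (hubV l q) (wTop l q k h)
  | 0, h => by
      refine ⟨rfl, by simp [wTop], ?_⟩
      intro e he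
      rw [show wTop l q 0 h = [ChV.top ⟨0, h⟩, hubV l q] from rfl, uSteps_cons_cons] at he
      rcases List.mem_cons.mp he with rfl | h'
      · rw [← top_zero_eq h]
        exact conn_top0_mem _
      · simp [uSteps_single] at h'
  | k+1, h => isUWalk_cons (wTop_walk k (by omega)) (top_step_mem k (by omega) h (by omega))

lemma wBot_walk : ∀ (k : ℕ) (h : k < l + 1),
    IsUWalk (ChE l q) (ChV.bot ⟨k, h⟩) (hubV l q) (wBot l q k h)
  | 0, h => by
      refine ⟨rfl, by simp [wBot], ?_⟩
      intro e he
      rw [show wBot l q 0 h = [ChV.bot ⟨0, h⟩, hubV l q] from rfl, uSteps_cons_cons] at he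
      rcases List.mem_cons.mp he with rfl | h'
      · rw [← bot_zero_eq h]
        exact conn_bot0_mem _
      · simp [uSteps_single] at h'
  | k+1, h => isUWalk_cons (wBot_walk k (by omega)) (bot_step_mem k (by omega) h (by omega))

/-- A walk from each node to the hub. -/
def toHub : ChV l q → List (ChV l q)
  | .top i => wTop l q i.val i.isLt
  | .bot i => wBot l q i.val i.isLt
  | .left i => if i = ⟨0, by omega⟩ then [ChV.left i] else [ChV.left i, hubV l q]
  | .right i => ChV.right i :: wTop l q l (by omega)
  | .vs => [ChV.vs, hubV l q]
  | .vt => ChV.vt :: ChV.right ⟨0, by omega⟩ :: wTop l q l (by omega)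

lemma top_last_eq (h : l < l + 1) : (ChV.top (l := l) (q := q) (Fin.last l)) = ChV.top ⟨l, h⟩ := rfl

lemma toHub_walk (v : ChV l q) : IsUWalk (ChE l q) v (hubV l q) (toHub v) := by
  cases v with
  | top i =>
      have h := wTop_walk (l := l) (q := q) i.val i.isLt
      simpa [toHub] using h
  | bot i =>
      have h := wBot_walk (l := l) (q := q) i.val i.isLt
      simpa [toHub] using h
  | left i =>
      show IsUWalk _ _ _ (if i = ⟨0, by omega⟩ then [ChV.left i] else [ChV.left i, hubV l q])
      split
      · next hi =>
          subst hi
          exact ⟨rfl, rfl, by simp [uSteps_single]⟩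
      · next hi =>
          refine ⟨rfl, by simp, ?_⟩
          intro e he
          rw [uSteps_cons_cons] at he
          rcases List.mem_cons.mp he with rfl | h'
          · exact clique_left_mem _ _ hi
          · simp [uSteps_single] at h'
  | right i =>
      refine isUWalk_cons (wTop_walk l (by omega)) ?_
      rw [Sym2.eq_swap, ← top_last_eq (by omega)]
      exact conn_topl_mem i
  | vs =>
      show IsUWalk _ _ _ [ChV.vs, hubV l q]
      refine ⟨rfl, by simp, ?_⟩
      intro e he
      rw [uSteps_cons_cons] at he
      rcases List.mem_cons.mp he with rfl | h'
      · exact conn_vs_mem _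
      · simp [uSteps_single] at h'
  | vt =>
      refine isUWalk_cons (isUWalk_cons (wTop_walk l (by omega)) ?_) ?_
      · rw [Sym2.eq_swap, ← top_last_eq (by omega)]
        exact conn_topl_mem _
      · exact conn_vt_mem _

lemma exists_walk (u v : ChV l q) : ∃ L, IsUWalk (ChE l q) u v L :=
  ⟨toHub u ++ ((toHub v).reverse).tail,
    isUWalk_trans (toHub_walk u) (isUWalk_reverse (toHub_walk v))⟩

end CheungWalks
section CheungDist

variable {l q : ℕ}

lemma edge_cpos {u v : ChV l q} (h : s(u, v) ∈ ChE l q) :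
    cpos l (chpos u) (chpos v) ≤ 1 := by
  simp only [ChE, ChEpaths, ChEcliques, ChEconn, Finset.mem_union, Finset.mem_image,
    Finset.mem_filter, Finset.mem_univ, true_and] at h
  rcases h with ((⟨i, hi⟩ | ⟨i, hi⟩) | (⟨p, hp, hpe⟩ | ⟨p, hp, hpe⟩)) |
    (((((⟨i, hi⟩ | ⟨i, hi⟩) | ⟨i, hi⟩) | ⟨i, hi⟩) | ⟨i, hi⟩) | ⟨i, hi⟩)
  · rcases Sym2.eq_iff.mp hi with ⟨rfl, rfl⟩ | ⟨rfl, rfl⟩ <;>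
      · apply cpos_le_one
        have := i.isLt
        simp [chpos]
        all_goals omega
  · rcases Sym2.eq_iff.mp hi with ⟨rfl, rfl⟩ | ⟨rfl, rfl⟩ <;>
      · apply cpos_le_one
        have := i.isLt
        simp [chpos]
        all_goals omega
  · rcases Sym2.eq_iff.mp hpe with ⟨rfl, rfl⟩ | ⟨rfl, rfl⟩ <;>
      · apply cpos_le_one
        simp [chpos]
  · rcases Sym2.eq_iff.mp hpe with ⟨rfl, rfl⟩ | ⟨rfl, rfl⟩ <;>
      · apply cpos_le_one
        simp [chpos]
  · rcases Sym2.eq_iff.mp hi with ⟨rfl, rfl⟩ | ⟨rfl, rfl⟩ <;>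
      · apply cpos_le_one
        simp [chpos]
        all_goals omega
  · rcases Sym2.eq_iff.mp hi with ⟨rfl, rfl⟩ | ⟨rfl, rfl⟩ <;>
      · apply cpos_le_one
        simp [chpos]
        all_goals omega
  · rcases Sym2.eq_iff.mp hi with ⟨rfl, rfl⟩ | ⟨rfl, rfl⟩ <;>
      · apply cpos_le_one
        simp [chpos]
        all_goals omega
  · rcases Sym2.eq_iff.mp hi with ⟨rfl, rfl⟩ | ⟨rfl, rfl⟩ <;>
      · apply cpos_le_one
        simp [chpos]
        all_goals omega
  · rcases Sym2.eq_iff.mp hi with ⟨rfl, rfl⟩ | ⟨rfl, rfl⟩ <;>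
      · apply cpos_le_one
        simp [chpos]
  · rcases Sym2.eq_iff.mp hi with ⟨rfl, rfl⟩ | ⟨rfl, rfl⟩ <;>
      · apply cpos_le_one
        simp [chpos]

lemma walk_cpos : ∀ (L : List (ChV l q)) (u v : ChV l q), IsUWalk (ChE l q) u v L →
    cpos l (chpos u) (chpos v) ≤ (uSteps L).length
  | [], u, v, h => by obtain ⟨h1, _, _⟩ := h; simp at h1
  | [a], u, v, h => by
      obtain ⟨h1, h2, _⟩ := h
      have h1' : a = u := by simpa using h1
      have h2' : a = v := by simpa using h2
      rw [← h1', ← h2']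
      simp [cpos_self]
  | a :: b :: L, u, v, h => by
      obtain ⟨h1, h2, h3⟩ := h
      have h1' : a = u := by simpa using h1
      have hstep : s(a, b) ∈ ChE l q := h3 _ (by rw [uSteps_cons_cons]; exact List.mem_cons_self)
      have htail : IsUWalk (ChE l q) b v (b :: L) :=
        ⟨rfl, by simpa [List.getLast?_cons_cons] using h2,
          fun e he => h3 e (by rw [uSteps_cons_cons]; exact List.mem_cons_of_mem _ he)⟩
      have ih := walk_cpos (b :: L) b v htail
      have tri := cpos_triangle l (chpos a) (chpos b) (chpos v)
      have e1 := edge_cpos hstep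
      rw [← h1', uSteps_cons_cons]
      simp only [List.length_cons]
      omega

lemma uDist_ge_cpos (u v : ChV l q) :
    (cpos l (chpos u) (chpos v) : ℝ) ≤ uDist (ChE l q) s(u, v) := by
  apply le_csInf
  · obtain ⟨L, hL⟩ := exists_walk u v
    exact ⟨((uSteps L).length : ℝ), u, v, rfl, L, hL, rfl⟩
  · rintro b ⟨u', v', huv, L, hL, rfl⟩
    rcases Sym2.eq_iff.mp huv with ⟨rfl, rfl⟩ | ⟨rfl, rfl⟩
    · exact_mod_cast walk_cpos L _ _ hL
    · rw [cpos_symm]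
      exact_mod_cast walk_cpos L _ _ hL

end CheungDist
section ChangeCount

/-- Number of sign changes in a boolean list. -/
def chgB : List Bool → ℕ
  | [] => 0
  | [_] => 0
  | a :: b :: L => (if a ≠ b then 1 else 0) + chgB (b :: L)

lemma chgB_parity : ∀ (L : List Bool) (x z : Bool), L.head? = some x → L.getLast? = some z →
    chgB L % 2 = if x = z then 0 else 1
  | [], x, z, hx, _ => by simp at hx
  | [a], x, z, hx, hz => by
      have hx' : a = x := by simpa using hx
      have hz' : a = z := by simpa using hz
      subst hx' hz'
      simp [chgB]
  | a :: b :: L, x, z, hx, hz => by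
      have hx' : a = x := by simpa using hx
      subst hx'
      have ih := chgB_parity (b :: L) b z rfl (by simpa [List.getLast?_cons_cons] using hz)
      rw [show chgB (a :: b :: L) = (if a ≠ b then 1 else 0) + chgB (b :: L) from rfl]
      rcases Nat.even_or_odd (chgB (b :: L)) with he | ho <;>
        cases a <;> cases b <;> cases z <;> simp_all <;> omega

lemma chgB_eq_zero : ∀ (a : Bool) (L : List Bool), chgB (a :: L) = 0 → ∀ x ∈ a :: L, x = a
  | a, [], _, x, hx => by simpa using hx
  | a, b :: L, h, x, hx => by
      rw [show chgB (a :: b :: L) = (if a ≠ b then 1 else 0) + chgB (b :: L) from rfl] at h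
      have hab : a = b := by by_contra hne; simp [hne] at h
      have h2 : chgB (b :: L) = 0 := by omega
      rcases List.mem_cons.mp hx with rfl | hx'
      · rfl
      · exact (chgB_eq_zero b L h2 x hx').trans hab.symm

lemma two_le_chgB : ∀ (L : List Bool), L.head? = some false →
    ∀ i j : ℕ, i < j → ∀ (hj : j < L.length) (hi : i < L.length),
    L[i] = true → L[j] = false → 2 ≤ chgB L
  | [], h, _, _, _, _, _, _, _ => by simp at h
  | a :: t, hh, i, j, hij, hj, hi, hgi, hgj => by
      have ha : a = false := by simpa using hh
      subst ha
      match i, hi, hgi with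
      | 0, _, hgi => simp at hgi
      | k+1, hi, hgi =>
        match j, hj, hgj with
        | m+1, hj, hgj =>
          simp only [List.getElem_cons_succ] at hgi hgj
          simp only [List.length_cons, Nat.add_lt_add_iff_right] at hi hj
          cases t with
          | nil => simp at hj
          | cons c r =>
            by_cases hc : c = false
            · subst hc
              have h2 := two_le_chgB (false :: r) rfl k m (by omega) hj hi hgi hgj
              rw [show chgB (false :: false :: r) = (if (false : Bool) ≠ false then 1 else 0)
                + chgB (false :: r) from rfl]
              simpa using h2
            · have hc' : c = true := by
                cases c
                · exact absurd rfl hc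
                · rfl
              subst hc'
              have h1 : 1 ≤ chgB (true :: r) := by
                by_contra h0
                have h0' : chgB (true :: r) = 0 := by omega
                have := chgB_eq_zero true r h0' ((true :: r)[m]) (List.getElem_mem hj)
                rw [hgj] at this
                simp at this
              rw [show chgB (false :: true :: r) = (if (false : Bool) ≠ true then 1 else 0)
                + chgB (true :: r) from rfl]
              simp only [ne_eq, Bool.false_eq_true, not_false_eq_true, if_pos]
              omega

end ChangeCount
section SumMachinery

variable {V : Type*} [DecidableEq V]

lemma mem_of_mem_uSteps {P : List V} {e : Sym2 V} (he : e ∈ uSteps P) :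
    ∀ x ∈ e, x ∈ P := by
  intro x hx
  unfold uSteps at he
  rcases List.mem_map.mp he with ⟨p, hp, rfl⟩
  obtain ⟨p1, p2⟩ := p
  obtain ⟨h1, h2⟩ := List.of_mem_zip hp
  rcases Sym2.mem_iff.mp hx with rfl | rfl
  · exact h1
  · exact List.mem_of_mem_tail h2

lemma uSteps_nodup : ∀ {P : List V}, P.Nodup → (uSteps P).Nodup
  | [], _ => by simp [uSteps_nil]
  | [a], _ => by simp [uSteps_single]
  | a :: b :: L, h => by
      rw [uSteps_cons_cons]
      have h1 : a ∉ (b :: L) := (List.nodup_cons.mp h).1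
      have h2 := uSteps_nodup (List.nodup_cons.mp h).2
      refine List.nodup_cons.mpr ⟨?_, h2⟩
      intro hmem
      exact h1 (mem_of_mem_uSteps hmem a (Sym2.mem_mk_left a b))

end SumMachinery

section FinalCount

variable {l q : ℕ}

lemma cpos_card_sum (l p p' : ℕ) :
    cpos l p p' = ∑ a ∈ Finset.range (l+2), (if inCut2 l a p ≠ inCut2 l a p' then 1 else 0) :=
  Finset.card_filter _ _

lemma sum_cpos_eq : ∀ P : List (ChV l q),
    ((P.zip P.tail).map (fun e => cpos l (chpos e.1) (chpos e.2))).sum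
      = ∑ a ∈ Finset.range (l+2), chgB (P.map (fun v => inCut2 l a (chpos v)))
  | [] => by simp [chgB]
  | [u] => by simp [chgB]
  | u :: v :: P => by
      have ih := sum_cpos_eq (v :: P)
      rw [show (u :: v :: P).tail = v :: P from rfl, List.zip_cons_cons, List.map_cons,
        List.sum_cons]
      rw [show (v :: P).zip P = (v :: P).zip (v :: P).tail from rfl, ih]
      rw [cpos_card_sum, ← Finset.sum_add_distrib]
      refine Finset.sum_congr rfl fun a _ => ?_
      rfl

end FinalCount
theorem stmt14 (r l : ℕ) (hl : 1 ≤ l)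
    (x : ↥(uCompleteAll (ChV l r)) → ℝ)
    (hx : x ∈ uHamPathVecs Finset.univ (uCompleteAll (ChV l r)) ChV.vs ChV.vt) :
    3 * (l : ℝ) - 2 ≤ uDot (uCompleteAll (ChV l r)) (uDist (ChE l r)) x := by
  classical
  obtain ⟨P, hnd, htf, hhd, hlast, hsteps, hxval⟩ := hx
  -- Rewrite the objective as a sum over the steps of the Hamiltonian path.
  have hdot : uDot (uCompleteAll (ChV l r)) (uDist (ChE l r)) x
      = ((P.zip P.tail).map (fun e => uDist (ChE l r) (Sym2.mk e.1 e.2))).sum := by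
    unfold uDot
    have e1 : ∀ e ∈ (uCompleteAll (ChV l r)).attach,
        uDist (ChE l r) e.val * x e
          = (fun e' => if e' ∈ uSteps P then uDist (ChE l r) e' else 0) e.val := by
      intro e _
      rw [hxval e]
      by_cases h : e.val ∈ uSteps P <;> simp [h]
    rw [Finset.sum_congr rfl e1]
    rw [Finset.sum_attach (uCompleteAll (ChV l r))
      (fun e' => if e' ∈ uSteps P then uDist (ChE l r) e' else 0)]
    rw [← Finset.sum_filter]
    have e2 : (uCompleteAll (ChV l r)).filter (fun e => e ∈ uSteps P)
        = (uSteps P).toFinset := by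
      ext e
      simp only [Finset.mem_filter, List.mem_toFinset]
      exact ⟨fun h => h.2, fun h => ⟨hsteps e h, h⟩⟩
    rw [e2, List.sum_toFinset _ (uSteps_nodup hnd)]
    rw [show uSteps P = (P.zip P.tail).map (fun p => Sym2.mk p.1 p.2) from rfl, List.map_map]
    rfl
  -- The main combinatorial count.
  have hP3 : 3 * (l + 1) ≤ ((P.zip P.tail).map
      (fun e => cpos l (chpos e.1) (chpos e.2))).sum := by
    rw [sum_cpos_eq]
    have hhead : ∀ a : ℕ, (P.map (fun v => inCut2 l a (chpos v))).head? = some false := by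
      intro a
      rw [List.head?_map, hhd]
      simp [inCut2, chpos]
    have hlastm : ∀ a : ℕ, a < l + 2 →
        (P.map (fun v => inCut2 l a (chpos v))).getLast? = some true := by
      intro a ha
      rw [List.getLast?_map, hlast]
      simp only [Option.map_some, Option.some.injEq, inCut2, chpos, decide_eq_true_iff]
      exact decide_eq_true (by omega)
    have hodd : ∀ a ∈ Finset.range (l+2),
        chgB (P.map (fun v => inCut2 l a (chpos v))) % 2 = 1 := by
      intro a ha
      have := chgB_parity (P.map (fun v => inCut2 l a (chpos v))) false true
        (hhead a) (hlastm a (Finset.mem_range.mp ha))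
      simpa using this
    have hpair : ∀ a b : ℕ, a < b → b < l + 2 →
        chgB (P.map (fun v => inCut2 l a (chpos v))) ≤ 1 →
        chgB (P.map (fun v => inCut2 l b (chpos v))) ≤ 1 → False := by
      intro a b hab hb ga gb
      have hal : a ≤ l := by omega
      have hAm : (ChV.top (q := r) ⟨a, by omega⟩) ∈ P := by
        rw [← List.mem_toFinset, htf]; exact Finset.mem_univ _
      have hBm : (ChV.bot (q := r) ⟨l - a, by omega⟩) ∈ P := by
        rw [← List.mem_toFinset, htf]; exact Finset.mem_univ _
      obtain ⟨iA, hiA, hgA⟩ := List.mem_iff_getElem.mp hAm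
      obtain ⟨iB, hiB, hgB⟩ := List.mem_iff_getElem.mp hBm
      have hfaA : inCut2 l a (chpos (ChV.top (l := l) (q := r) ⟨a, by omega⟩)) = true := by
        simp only [inCut2, chpos, decide_eq_true_iff]
        exact decide_eq_true (by omega)
      have hfaB : inCut2 l a (chpos (ChV.bot (l := l) (q := r) ⟨l - a, by omega⟩)) = false := by
        simp only [inCut2, chpos, decide_eq_false_iff_not]
        exact decide_eq_false (by omega)
      have hfbA : inCut2 l b (chpos (ChV.top (l := l) (q := r) ⟨a, by omega⟩)) = false := by
        simp only [inCut2, chpos, decide_eq_false_iff_not]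
        exact decide_eq_false (by omega)
      have hfbB : inCut2 l b (chpos (ChV.bot (l := l) (q := r) ⟨l - a, by omega⟩)) = true := by
        simp only [inCut2, chpos, decide_eq_true_iff]
        exact decide_eq_true (by omega)
      have hne : iA ≠ iB := by
        intro h
        subst h
        have hcon := hgA.symm.trans hgB
        cases hcon
      rcases Nat.lt_or_ge iA iB with hlt | hge
      · have h2 := two_le_chgB (P.map (fun v => inCut2 l a (chpos v))) (hhead a) iA iB hlt
          (by simpa using hiB) (by simpa using hiA)
          (by simpa using (show inCut2 l a (chpos (P[iA]'hiA)) = true from by rw [hgA]; exact hfaA))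
          (by simpa using (show inCut2 l a (chpos (P[iB]'hiB)) = false from by rw [hgB]; exact hfaB))
        omega
      · have hlt' : iB < iA := by omega
        have h2 := two_le_chgB (P.map (fun v => inCut2 l b (chpos v))) (hhead b) iB iA hlt'
          (by simpa using hiA) (by simpa using hiB)
          (by simpa using (show inCut2 l b (chpos (P[iB]'hiB)) = true from by rw [hgB]; exact hfbB))
          (by simpa using (show inCut2 l b (chpos (P[iA]'hiA)) = false from by rw [hgA]; exact hfbA))
        omega
    set T := Finset.range (l+2) with hT
    set S1 := T.filter (fun a => chgB (P.map (fun v => inCut2 l a (chpos v))) ≤ 1) with hS1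
    have hS1card : S1.card ≤ 1 := by
      apply Finset.card_le_one.mpr
      intro a ha b hb
      simp only [hS1, Finset.mem_filter, hT, Finset.mem_range] at ha hb
      by_contra hne
      rcases Nat.lt_or_ge a b with h | h
      · exact hpair a b h hb.1 ha.2 hb.2
      · exact hpair b a (by omega) ha.1 hb.2 ha.2
    have h3 : ∀ a ∈ T \ S1, 3 ≤ chgB (P.map (fun v => inCut2 l a (chpos v))) := by
      intro a ha
      rw [Finset.mem_sdiff] at ha
      have ho := hodd a ha.1
      have hn : ¬ (chgB (P.map (fun v => inCut2 l a (chpos v))) ≤ 1) := by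
        intro hle
        exact ha.2 (Finset.mem_filter.mpr ⟨ha.1, hle⟩)
      omega
    have hTc : T.card = l + 2 := by simp [hT]
    have hsub : S1 ⊆ T := Finset.filter_subset _ _
    have hcard : l + 1 ≤ (T \ S1).card := by
      rw [Finset.card_sdiff_of_subset hsub]
      omega
    have hsum1 : (T \ S1).card * 3 ≤ ∑ a ∈ T \ S1, chgB (P.map (fun v => inCut2 l a (chpos v))) := by
      simpa [smul_eq_mul] using Finset.card_nsmul_le_sum (T \ S1)
        (fun a => chgB (P.map (fun v => inCut2 l a (chpos v)))) 3 h3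
    have hsum2 : ∑ a ∈ T \ S1, chgB (P.map (fun v => inCut2 l a (chpos v)))
        ≤ ∑ a ∈ T, chgB (P.map (fun v => inCut2 l a (chpos v))) :=
      Finset.sum_le_sum_of_subset Finset.sdiff_subset
    omega
  -- Put everything together.
  rw [hdot]
  have hle1 : ((P.zip P.tail).map (fun e => (cpos l (chpos e.1) (chpos e.2) : ℝ))).sum
      ≤ ((P.zip P.tail).map (fun e => uDist (ChE l r) (Sym2.mk e.1 e.2))).sum := by
    apply List.sum_le_sum
    rintro ⟨e1, e2⟩ _
    exact uDist_ge_cpos e1 e2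
  have hcast : ((P.zip P.tail).map (fun e => (cpos l (chpos e.1) (chpos e.2) : ℝ))).sum
      = ((((P.zip P.tail).map (fun e => cpos l (chpos e.1) (chpos e.2))).sum : ℕ) : ℝ) := by
    rw [Nat.cast_list_sum, List.map_map]
    rfl
  rw [hcast] at hle1
  have hc2 : ((3 * (l + 1) : ℕ) : ℝ)
      ≤ ((((P.zip P.tail).map (fun e => cpos l (chpos e.1) (chpos e.2))).sum : ℕ) : ℝ) :=
    Nat.cast_le.mpr hP3
  have hc3 : ((3 * (l + 1) : ℕ) : ℝ) = 3 * (l : ℝ) + 3 := by push_cast; ring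
  rw [hc3] at hc2
  linarith
end TSPGap
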